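/- Given the translation ball B_t = {t : ‖t_c - t‖ ≤ t_r} and the feasible set ℱ = ∪ᵢ {(R,t) : ‖Rp_i - q_i + t‖² ≤ ε²} over SO(2)-type rotations (rotations about a fixed axis), define for each i the angular interval a^i of rotations R with ∠(Rp_i, q_i - t_c) ≤ arccos(min(1, max(-1, h_i))) where h_i = (‖p_i‖² + ‖q_i - t_c‖² - (ε + t_r)²)/(2‖p_i‖‖q_i - t_c‖), and let B_r = ∪ᵢ a^i. Then (B_t × 𝒮) ∩ ℱ = (B_t × B_r) ∩ ℱ, where 𝒮 denotes the full rotation group about the fixed axis. -/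

import Mathlib

open Matrix

noncomputable def enorm3 (v : Fin 3 → ℝ) : ℝ := Real.sqrt (∑ i, (v i) ^ 2)

def IsSO3 (R : Matrix (Fin 3) (Fin 3) ℝ) : Prop :=
  R ∈ Matrix.orthogonalGroup (Fin 3) ℝ ∧ R.det = 1

/-- the angle between two nonzero vectors -/
noncomputable def vecAngle (u v : Fin 3 → ℝ) : ℝ :=
  Real.arccos ((u ⬝ᵥ v) / (enorm3 u * enorm3 v))

lemma enorm3_eq_norm (v : Fin 3 → ℝ) :
    enorm3 v = ‖(WithLp.equiv 2 (Fin 3 → ℝ)).symm v‖ := by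
  rw [EuclideanSpace.norm_eq]
  simp [enorm3, sq_abs]

lemma dot_eq_inner (u v : Fin 3 → ℝ) : u ⬝ᵥ v =
    inner ℝ ((WithLp.equiv 2 (Fin 3 → ℝ)).symm u) ((WithLp.equiv 2 (Fin 3 → ℝ)).symm v) := by
  simp [PiLp.inner_apply, dotProduct, RCLike.inner_apply, mul_comm]

lemma enorm3_nonneg (v : Fin 3 → ℝ) : 0 ≤ enorm3 v := by
  rw [enorm3_eq_norm]; exact norm_nonneg _

lemma enorm3_pos (v : Fin 3 → ℝ) (hv : v ≠ 0) : 0 < enorm3 v := by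
  rw [enorm3_eq_norm]
  refine norm_pos_iff.mpr ?_
  simpa using hv

lemma enorm3_sub_le (u v w : Fin 3 → ℝ) :
    enorm3 (u - w) ≤ enorm3 (u - v) + enorm3 (v - w) := by
  have h0 : u - w = (u - v) + (v - w) := by abel
  rw [h0]
  simp only [enorm3_eq_norm]
  exact norm_add_le ((WithLp.equiv 2 (Fin 3 → ℝ)).symm (u - v))
    ((WithLp.equiv 2 (Fin 3 → ℝ)).symm (v - w))

lemma sq_enorm3 (v : Fin 3 → ℝ) : enorm3 v ^ 2 = v ⬝ᵥ v := by
  rw [dot_eq_inner, enorm3_eq_norm, ← real_inner_self_eq_norm_sq]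

lemma abs_dot_le (u v : Fin 3 → ℝ) : |u ⬝ᵥ v| ≤ enorm3 u * enorm3 v := by
  rw [dot_eq_inner, enorm3_eq_norm, enorm3_eq_norm]
  exact abs_real_inner_le_norm _ _

lemma enorm3_mulVec (R : Matrix (Fin 3) (Fin 3) ℝ) (h : R ∈ Matrix.orthogonalGroup (Fin 3) ℝ)
    (u : Fin 3 → ℝ) : enorm3 (R.mulVec u) = enorm3 u := by
  have hd : (R.mulVec u) ⬝ᵥ (R.mulVec u) = u ⬝ᵥ u := by
    rw [Matrix.dotProduct_mulVec]
    rw [show R.vecMul (R.mulVec u) = (Rᵀ * R).mulVec u by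
      rw [← Matrix.mulVec_transpose, Matrix.mulVec_mulVec]]
    rw [show Rᵀ * R = 1 from ?_, Matrix.one_mulVec]
    have := Matrix.mem_orthogonalGroup_iff' (Fin 3) ℝ |>.mp h
    simpa using this
  have h1 := sq_enorm3 (R.mulVec u)
  have h2 := sq_enorm3 u
  have := enorm3_nonneg (R.mulVec u)
  have := enorm3_nonneg u
  nlinarith [h1, h2, hd]

lemma expand_sub (u v : Fin 3 → ℝ) :
    enorm3 (u - v) ^ 2 = enorm3 u ^ 2 + enorm3 v ^ 2 - 2 * (u ⬝ᵥ v) := by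
  rw [sq_enorm3, sq_enorm3, sq_enorm3, sub_dotProduct, dotProduct_sub,
    dotProduct_sub, dotProduct_comm v u]
  ring

theorem stmt_10 (N : ℕ) (p q : Fin N → (Fin 3 → ℝ)) (t_c : Fin 3 → ℝ)
    (ε t_r : ℝ) (hε : 0 < ε) (ht : 0 ≤ t_r)
    (hp : ∀ i, p i ≠ 0) (hb : ∀ i, q i - t_c ≠ 0)
    (n : Fin 3 → ℝ) (hn : enorm3 n = 1)
    -- 𝒮: the full group of rotations about the fixed axis n
    (𝒮 : Set (Matrix (Fin 3) (Fin 3) ℝ))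
    (h𝒮 : 𝒮 = {R | IsSO3 R ∧ R.mulVec n = n})
    (Bt : Set (Fin 3 → ℝ)) (hBt : Bt = {t | enorm3 (t_c - t) ≤ t_r})
    (ℱ : Set (Matrix (Fin 3) (Fin 3) ℝ × (Fin 3 → ℝ)))
    (hℱ : ℱ = ⋃ i, {T | enorm3 (T.1.mulVec (p i) - q i + T.2) ^ 2 ≤ ε ^ 2})
    (h_ : Fin N → ℝ)
    (hh : ∀ i, h_ i = (enorm3 (p i) ^ 2 + enorm3 (q i - t_c) ^ 2 - (ε + t_r) ^ 2) /
      (2 * enorm3 (p i) * enorm3 (q i - t_c)))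
    (a : Fin N → Set (Matrix (Fin 3) (Fin 3) ℝ))
    (ha : ∀ i, a i = {R ∈ 𝒮 | vecAngle (R.mulVec (p i)) (q i - t_c) ≤
      Real.arccos (min 1 (max (-1) (h_ i)))})
    (Br : Set (Matrix (Fin 3) (Fin 3) ℝ)) (hBr : Br = ⋃ i, a i) :
    (𝒮 ×ˢ Bt) ∩ ℱ = (Br ×ˢ Bt) ∩ ℱ := by
  have hBr𝒮 : Br ⊆ 𝒮 := by
    intro R hR
    rw [hBr, Set.mem_iUnion] at hR
    obtain ⟨i, hi⟩ := hR
    rw [ha i] at hi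
    exact hi.1
  apply Set.Subset.antisymm
  · rintro ⟨R, t⟩ ⟨⟨hR, htB⟩, hF⟩
    refine ⟨⟨?_, htB⟩, hF⟩
    rw [hℱ, Set.mem_iUnion] at hF
    obtain ⟨i, hFi⟩ := hF
    rw [hBr, Set.mem_iUnion]
    refine ⟨i, ?_⟩
    rw [ha i]
    refine ⟨hR, ?_⟩
    -- notation
    set u : Fin 3 → ℝ := R.mulVec (p i) with hu
    set v : Fin 3 → ℝ := q i - t_c with hv
    have hRO : R ∈ Matrix.orthogonalGroup (Fin 3) ℝ := by
      rw [h𝒮] at hR; exact hR.1.1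
    have hA : enorm3 u = enorm3 (p i) := enorm3_mulVec R hRO (p i)
    have haP : 0 < enorm3 (p i) := enorm3_pos _ (hp i)
    have hbP : 0 < enorm3 v := enorm3_pos _ (hb i)
    -- step 1: ‖u - q i + t‖ ≤ ε
    have hF1 : enorm3 (u - q i + t) ^ 2 ≤ ε ^ 2 := hFi
    have hF2 : enorm3 (u - q i + t) ≤ ε := by
      nlinarith [enorm3_nonneg (u - q i + t)]
    -- step 2: ‖u - v‖ ≤ ε + t_r
    have htr : enorm3 (t_c - t) ≤ t_r := by rw [hBt] at htB; exact htB
    have hdist : enorm3 (u - v) ≤ ε + t_r := by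
      have htri := enorm3_sub_le u (q i - t) v
      have e1 : u - (q i - t) = u - q i + t := by abel
      have e2 : (q i - t) - v = t_c - t := by rw [hv]; abel
      rw [e1, e2] at htri
      linarith
    -- step 3+4: dot product lower bound
    have hsq : enorm3 (u - v) ^ 2 ≤ (ε + t_r) ^ 2 := by
      nlinarith [enorm3_nonneg (u - v)]
    have hexp := expand_sub u v
    have hdot : (enorm3 (p i) ^ 2 + enorm3 v ^ 2 - (ε + t_r) ^ 2) / 2 ≤ u ⬝ᵥ v := by
      rw [← hA]; nlinarith
    -- step 5: h_ i ≤ c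
    set c : ℝ := (u ⬝ᵥ v) / (enorm3 u * enorm3 v) with hc
    have hhc : h_ i ≤ c := by
      rw [hh i, hc, hA, ← hv, div_le_div_iff₀ (by positivity) (by positivity)]
      nlinarith [hdot, mul_pos haP hbP]
    -- -1 ≤ c
    have hCS := abs_dot_le u v
    have hm1 : (-1 : ℝ) ≤ c := by
      rw [hc, le_div_iff₀ (mul_pos (hA ▸ haP) hbP)]
      linarith [(abs_le.mp hCS).1]
    -- step 7
    have hclamp : min 1 (max (-1) (h_ i)) ≤ c := le_trans (min_le_right _ _) (max_le hm1 hhc)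
    have hclamp1 : (-1 : ℝ) ≤ min 1 (max (-1) (h_ i)) :=
      le_min (by norm_num) (le_max_left _ _)
    show Real.arccos c ≤ _
    simp only [Real.arccos_eq_pi_div_two_sub_arcsin]
    linarith [Real.monotone_arcsin hclamp]
  · rintro ⟨R, t⟩ ⟨⟨hR, htB⟩, hF⟩
    exact ⟨⟨hBr𝒮 hR, htB⟩, hF⟩
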